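/- Let V be a finite-dimensional normed real vector space, let μ, μ̂, μ̃ : V →ₗ[ℝ] V →ₗ[ℝ] V be bilinear maps (the Lie brackets of three Lie algebra structures on V), and let Û and Ũ be families of real-linear automorphisms of V indexed by ε ∈ (0,1] such that Û contracts μ to μ̂ and Ũ contracts μ̂ to μ̃. Assume all coefficients are given by Laurent series near 0 with finite principal part, i.e. for each x ∈ V there exist N : ℕ, δ > 0 and functions F, G : ℝ → V real-analytic on (−δ, δ) with Û ε x = ε^(−N) • F ε and (Û ε).symm x = ε^(−N) • G ε for all ε ∈ (0, δ), and similarly for Ũ ε x and (Ũ ε).symm x. Then there exists a positive integer ν such that the family ε ↦ Û (ε^ν) ∘ Ũ ε contracts μ to μ̃. -/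

import Mathlib

open Filter

/-- The family of automorphisms `U` contracts the bilinear map (Lie bracket) `μ` to `μ'`:
for all `x, y` the transformed bracket tends to `μ' x y` as `ε → 0⁺`. -/
def Contracts {V : Type*} [NormedAddCommGroup V] [NormedSpace ℝ V]
    (U : ℝ → (V ≃ₗ[ℝ] V)) (μ μ' : V →ₗ[ℝ] V →ₗ[ℝ] V) : Prop :=
  ∀ x y : V,
    Tendsto (fun ε => (U ε).symm (μ (U ε x) (U ε y))) (nhdsWithin 0 (Set.Ioi 0))
      (nhds (μ' x y))

/-- The pair of functions `h`, `g` is given near `0` by Laurent expansions with finite principal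
part: `h ε = ε^(-N) • F ε` and `g ε = ε^(-N) • G ε` on `(0, δ)` with `F`, `G` real-analytic on
`(-δ, δ)`. -/
def LaurentPair {V : Type*} [NormedAddCommGroup V] [NormedSpace ℝ V] (h g : ℝ → V) : Prop :=
  ∃ (N : ℕ) (δ : ℝ), 0 < δ ∧ ∃ F G : ℝ → V,
    AnalyticOnNhd ℝ F (Set.Ioo (-δ) δ) ∧ AnalyticOnNhd ℝ G (Set.Ioo (-δ) δ) ∧
    ∀ ε ∈ Set.Ioo (0 : ℝ) δ, h ε = (ε ^ (-(N : ℤ))) • F ε ∧ g ε = (ε ^ (-(N : ℤ))) • G ε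

section KeyAux

open Set

variable {V : Type*} [NormedAddCommGroup V] [NormedSpace ℝ V]

private lemma analyticAt_dslope_zero {f : ℝ → V} (hf : AnalyticAt ℝ f 0) :
    AnalyticAt ℝ (dslope f 0) 0 := by
  obtain ⟨p, hp⟩ := hf
  exact hp.has_fpower_series_dslope_fslope.analyticAt

private lemma dslope_identity (f : ℝ → ℝ) {η : ℝ} (hη : η ≠ 0) :
    f η = f 0 + η * dslope f 0 η := by
  rw [dslope_of_ne _ (by simpa using hη), slope_def_field]
  field_simp
  ring

/-- Core analytic lemma: if `Φ ε η = (ε^a * η^b)⁻¹ • ∑ r m η • S m ε` with `r m` analytic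
at `0` and `S m` continuous at `0`, and `Φ ε ·` converges as `η → 0⁺` to `L ε`, which in turn
converges to `l`, then `Φ ε (ε^ν)` converges to `l` for any `ν > a`. -/
private lemma keyE {ι : Type*} [Fintype ι] (r : ι → ℝ → ℝ) (S : ι → ℝ → V)
    (hr : ∀ m, AnalyticAt ℝ (r m) 0) (hS : ∀ m, ContinuousAt (S m) 0)
    (a b : ℕ) {δ : ℝ} (hδ : 0 < δ)
    (Φ : ℝ → ℝ → V) (L : ℝ → V) (l : V)
    (hrep : ∀ ε ∈ Ioo (0:ℝ) δ, ∀ η ∈ Ioo (0:ℝ) δ,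
      Φ ε η = (ε ^ a * η ^ b)⁻¹ • ∑ m, r m η • S m ε)
    (hlim1 : ∀ ε ∈ Ioo (0:ℝ) δ, Tendsto (Φ ε) (nhdsWithin 0 (Ioi 0)) (nhds (L ε)))
    (hlim2 : Tendsto L (nhdsWithin 0 (Ioi 0)) (nhds l))
    {ν : ℕ} (hν : a < ν) :
    Tendsto (fun ε => Φ ε (ε ^ ν)) (nhdsWithin 0 (Ioi 0)) (nhds l) := by
  classical
  set c : ℕ → ι → ℝ → ℝ := fun t m => (fun g => dslope g 0)^[t] (r m) with hc
  have hc0 : ∀ m, c 0 m = r m := fun m => rfl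
  have hcsucc : ∀ t m, c (t+1) m = dslope (c t m) 0 := by
    intro t m
    simp only [hc, Function.iterate_succ_apply']
  have hcan : ∀ t m, AnalyticAt ℝ (c t m) 0 := by
    intro t
    induction t with
    | zero => exact hr
    | succ t ih => intro m; rw [hcsucc]; exact analyticAt_dslope_zero (ih m)
  have hid : ∀ t m (η : ℝ), η ≠ 0 → c t m η = c t m 0 + η * c (t+1) m η := by
    intro t m η hη
    rw [hcsucc]
    exact dslope_identity (c t m) hη
  have hcont : ∀ t (ε : ℝ), Tendsto (fun η => ∑ m, c t m η • S m ε) (nhds 0)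
      (nhds (∑ m, c t m 0 • S m ε)) := by
    intro t ε
    exact tendsto_finset_sum _ fun m _ => ((hcan t m).continuousAt.smul continuousAt_const)
  have main : ∀ t, t ≤ b → ∀ ε ∈ Ioo (0:ℝ) δ,
      (∀ η : ℝ, η ≠ 0 →
        (η ^ b)⁻¹ • ∑ m, r m η • S m ε = (η ^ (b - t))⁻¹ • ∑ m, c t m η • S m ε)
      ∧ Tendsto (fun η => (η ^ (b - t))⁻¹ • ∑ m, c t m η • S m ε)
          (nhdsWithin 0 (Ioi 0)) (nhds (ε ^ a • L ε)) := by
    intro t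
    induction t with
    | zero =>
      intro _ ε hε
      constructor
      · intro η hη; rfl
      · have heq : ∀ᶠ η in nhdsWithin (0:ℝ) (Ioi 0),
            (ε ^ a) • Φ ε η = (η ^ (b - 0))⁻¹ • ∑ m, c 0 m η • S m ε := by
          filter_upwards [Ioo_mem_nhdsGT_of_mem (show (0:ℝ) ∈ Ico (0:ℝ) δ from ⟨le_refl _, hδ⟩)]
            with η hη
          rw [hrep ε hε η hη, smul_smul, mul_inv, ← mul_assoc,
            mul_inv_cancel₀ (pow_ne_zero _ hε.1.ne'), one_mul, Nat.sub_zero]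
          simp only [hc0]
        exact Tendsto.congr' heq ((hlim1 ε hε).const_smul _)
    | succ t ih =>
      intro ht ε hε
      obtain ⟨idt, limt⟩ := ih (Nat.le_of_succ_le ht) ε hε
      have htb : t < b := ht
      have hzero : (∑ m, c t m 0 • S m ε) = 0 := by
        have h1 : Tendsto (fun η => ∑ m, c t m η • S m ε) (nhdsWithin 0 (Ioi 0))
            (nhds (∑ m, c t m 0 • S m ε)) := (hcont t ε).mono_left nhdsWithin_le_nhds
        have h3 : Tendsto (fun η : ℝ => η ^ (b - t)) (nhdsWithin 0 (Ioi 0)) (nhds 0) := by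
          have := (continuous_pow (b - t)).tendsto (0:ℝ)
          rw [zero_pow (Nat.sub_ne_zero_of_lt htb)] at this
          exact this.mono_left nhdsWithin_le_nhds
        have h2 : Tendsto (fun η => ∑ m, c t m η • S m ε) (nhdsWithin 0 (Ioi 0)) (nhds 0) := by
          have h4 := h3.smul limt
          rw [zero_smul] at h4
          apply h4.congr'
          filter_upwards [self_mem_nhdsWithin] with η (hη : η ∈ Ioi (0:ℝ))
          rw [smul_smul, mul_inv_cancel₀ (pow_ne_zero _ (ne_of_gt hη)), one_smul]
        exact tendsto_nhds_unique h1 h2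
      have idstep : ∀ η : ℝ, η ≠ 0 →
          (η ^ (b - t))⁻¹ • ∑ m, c t m η • S m ε
            = (η ^ (b - (t+1)))⁻¹ • ∑ m, c (t+1) m η • S m ε := by
        intro η hη
        have hsum : ∑ m, c t m η • S m ε
            = η • ∑ m, c (t+1) m η • S m ε := by
          calc ∑ m, c t m η • S m ε
              = ∑ m, (c t m 0 • S m ε + (η * c (t+1) m η) • S m ε) := by
                refine Finset.sum_congr rfl fun m _ => ?_
                rw [← add_smul, ← hid t m η hη]
            _ = (∑ m, c t m 0 • S m ε) + ∑ m, (η * c (t+1) m η) • S m ε := by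
                rw [Finset.sum_add_distrib]
            _ = η • ∑ m, c (t+1) m η • S m ε := by
                rw [hzero, zero_add, Finset.smul_sum]
                refine Finset.sum_congr rfl fun m _ => ?_
                rw [smul_smul]
        rw [hsum, smul_smul]
        congr 1
        have hbt : b - t = (b - (t+1)) + 1 := by omega
        rw [hbt, pow_succ, mul_inv, mul_assoc, inv_mul_cancel₀ hη, mul_one]
      constructor
      · intro η hη
        rw [idt η hη, idstep η hη]
      · apply limt.congr'
        filter_upwards [self_mem_nhdsWithin] with η (hη : η ∈ Ioi (0:ℝ))
        exact idstep η (ne_of_gt hη)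
  have hval : ∀ ε ∈ Ioo (0:ℝ) δ, ∑ m, c b m 0 • S m ε = ε ^ a • L ε := by
    intro ε hε
    obtain ⟨_, limb⟩ := main b le_rfl ε hε
    have limb' : Tendsto (fun η => ∑ m, c b m η • S m ε) (nhdsWithin 0 (Ioi 0))
        (nhds (ε ^ a • L ε)) := by
      apply limb.congr
      intro η
      rw [Nat.sub_self, pow_zero, inv_one, one_smul]
    exact tendsto_nhds_unique ((hcont b ε).mono_left nhdsWithin_le_nhds) limb'
  have hν1 : 1 ≤ ν := by omega
  have hfin : ∀ᶠ ε in nhdsWithin (0:ℝ) (Ioi 0),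
      Φ ε (ε ^ ν) = L ε + (ε ^ (ν - a)) • ∑ m, c (b+1) m (ε ^ ν) • S m ε := by
    filter_upwards [Ioo_mem_nhdsGT_of_mem
      (show (0:ℝ) ∈ Ico (0:ℝ) (min δ 1) from ⟨le_refl _, lt_min hδ one_pos⟩)] with ε hε
    have hε0 : 0 < ε := hε.1
    have hεδ : ε ∈ Ioo (0:ℝ) δ := ⟨hε0, lt_of_lt_of_le hε.2 (min_le_left _ _)⟩
    have hε1 : ε < 1 := lt_of_lt_of_le hε.2 (min_le_right _ _)
    have hην : ε ^ ν ∈ Ioo (0:ℝ) δ := by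
      constructor
      · exact pow_pos hε0 ν
      · calc ε ^ ν ≤ ε ^ 1 := pow_le_pow_of_le_one hε0.le hε1.le hν1
          _ = ε := pow_one ε
          _ < δ := hεδ.2
    have hη0 : (ε ^ ν : ℝ) ≠ 0 := ne_of_gt hην.1
    obtain ⟨idb, _⟩ := main b le_rfl ε hεδ
    have e1 : Φ ε (ε ^ ν) = (ε ^ a)⁻¹ • ((ε ^ ν) ^ b)⁻¹ • ∑ m, r m (ε ^ ν) • S m ε := by
      rw [hrep ε hεδ (ε ^ ν) hην, mul_inv, smul_smul]
    have e2 : ((ε ^ ν) ^ b)⁻¹ • ∑ m, r m (ε ^ ν) • S m ε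
        = ∑ m, c b m (ε ^ ν) • S m ε := by
      have := idb (ε ^ ν) hη0
      rw [this, Nat.sub_self, pow_zero, inv_one, one_smul]
    have e3 : ∑ m, c b m (ε ^ ν) • S m ε
        = ε ^ a • L ε + (ε ^ ν) • ∑ m, c (b+1) m (ε ^ ν) • S m ε := by
      calc ∑ m, c b m (ε ^ ν) • S m ε
          = ∑ m, (c b m 0 • S m ε + ((ε ^ ν) * c (b+1) m (ε ^ ν)) • S m ε) := by
            refine Finset.sum_congr rfl fun m _ => ?_
            rw [← add_smul, ← hid b m (ε ^ ν) hη0]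
        _ = (∑ m, c b m 0 • S m ε) + ∑ m, ((ε ^ ν) * c (b+1) m (ε ^ ν)) • S m ε := by
            rw [Finset.sum_add_distrib]
        _ = ε ^ a • L ε + (ε ^ ν) • ∑ m, c (b+1) m (ε ^ ν) • S m ε := by
            rw [hval ε hεδ, Finset.smul_sum]
            congr 1
            refine Finset.sum_congr rfl fun m _ => ?_
            rw [smul_smul]
    rw [e1, e2, e3, smul_add, smul_smul, smul_smul,
      inv_mul_cancel₀ (pow_ne_zero _ hε0.ne'), one_smul]
    congr 2
    have hpa : ε ^ ν = ε ^ a * ε ^ (ν - a) := by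
      rw [← pow_add]; congr 1; omega
    rw [hpa, ← mul_assoc, inv_mul_cancel₀ (pow_ne_zero _ hε0.ne'), one_mul]
  have hA : Tendsto (fun ε : ℝ => ε ^ (ν - a)) (nhdsWithin 0 (Ioi 0)) (nhds 0) := by
    have := (continuous_pow (ν - a)).tendsto (0:ℝ)
    rw [zero_pow (by omega : ν - a ≠ 0)] at this
    exact this.mono_left nhdsWithin_le_nhds
  have hB : Tendsto (fun ε : ℝ => ∑ m, c (b+1) m (ε ^ ν) • S m ε) (nhdsWithin 0 (Ioi 0))
      (nhds (∑ m, c (b+1) m 0 • S m 0)) := by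
    apply tendsto_finset_sum
    intro m _
    have hpow : Tendsto (fun ε : ℝ => ε ^ ν) (nhdsWithin 0 (Ioi 0)) (nhds 0) := by
      have := (continuous_pow ν).tendsto (0:ℝ)
      rw [zero_pow (by omega : ν ≠ 0)] at this
      exact this.mono_left nhdsWithin_le_nhds
    exact (((hcan (b+1) m).continuousAt.tendsto.comp hpow)).smul
      ((hS m).mono_left nhdsWithin_le_nhds)
  have h2 : Tendsto (fun ε => L ε + (ε ^ (ν - a)) • ∑ m, c (b+1) m (ε ^ ν) • S m ε)
      (nhdsWithin 0 (Ioi 0)) (nhds (l + (0:ℝ) • ∑ m, c (b+1) m 0 • S m 0)) :=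
    hlim2.add (hA.smul hB)
  rw [zero_smul, add_zero] at h2
  exact Tendsto.congr' (by filter_upwards [hfin] with ε h using h.symm) h2

private lemma zpow_neg_nat_eq (ε : ℝ) (hε : ε ≠ 0) {N K : ℕ} (h : N ≤ K) :
    (ε ^ (-(N:ℤ)) : ℝ) = (ε ^ K)⁻¹ * ε ^ (K - N) := by
  have hK : (ε:ℝ) ^ K = ε ^ N * ε ^ (K - N) := by rw [← pow_add]; congr 1; omega
  rw [zpow_neg, zpow_natCast, hK, mul_inv, mul_assoc,
    inv_mul_cancel₀ (pow_ne_zero _ hε), mul_one]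

private lemma sum_perm4 {β : Type*} [AddCommMonoid β] {κ₁ κ₂ κ₃ κ₄ : Type*}
    [Fintype κ₁] [Fintype κ₂] [Fintype κ₃] [Fintype κ₄]
    (X : κ₁ → κ₂ → κ₃ → κ₄ → β) :
    ∑ l : κ₄, ∑ k : κ₃, ∑ i : κ₁, ∑ j : κ₂, X i j k l
      = ∑ i : κ₁, ∑ j : κ₂, ∑ l : κ₄, ∑ k : κ₃, X i j k l := by
  have e1 : ∑ u : κ₄ × κ₃, ∑ v : κ₁ × κ₂, X v.1 v.2 u.2 u.1
      = ∑ l : κ₄, ∑ k : κ₃, ∑ i : κ₁, ∑ j : κ₂, X i j k l := by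
    rw [Fintype.sum_prod_type]
    refine Finset.sum_congr rfl fun l _ => ?_
    refine Finset.sum_congr rfl fun k _ => ?_
    rw [Fintype.sum_prod_type]
  have e2 : ∑ v : κ₁ × κ₂, ∑ u : κ₄ × κ₃, X v.1 v.2 u.2 u.1
      = ∑ i : κ₁, ∑ j : κ₂, ∑ l : κ₄, ∑ k : κ₃, X i j k l := by
    rw [Fintype.sum_prod_type]
    refine Finset.sum_congr rfl fun i _ => ?_
    refine Finset.sum_congr rfl fun j _ => ?_
    rw [Fintype.sum_prod_type]
  rw [← e1, ← e2, Finset.sum_comm]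

end KeyAux

/-- If `Û` contracts `μ` to `μ̂`, `Ũ` contracts `μ̂` to `μ̃`, and the coefficients of both
families are given by Laurent series near `0`, then for some positive integer `ν` the family
`ε ↦ Û (ε^ν) ∘ Ũ ε` contracts `μ` to `μ̃`. -/
theorem contraction_composition_laurent {V : Type*} [NormedAddCommGroup V] [NormedSpace ℝ V]
    [FiniteDimensional ℝ V]
    (μ μh μt : V →ₗ[ℝ] V →ₗ[ℝ] V)
    (Uh Ut : ℝ → (V ≃ₗ[ℝ] V))
    (h1 : Contracts Uh μ μh) (h2 : Contracts Ut μh μt)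
    (hlaurent : ∀ x : V,
      LaurentPair (fun ε => Uh ε x) (fun ε => (Uh ε).symm x) ∧
      LaurentPair (fun ε => Ut ε x) (fun ε => (Ut ε).symm x)) :
    ∃ ν : ℕ, 0 < ν ∧ Contracts (fun ε => (Ut ε).trans (Uh (ε ^ ν))) μ μt := by
  classical
  rcases subsingleton_or_nontrivial V with hV | hV
  · refine ⟨1, one_pos, fun x y => ?_⟩
    have he : (fun ε : ℝ => ((Ut ε).trans (Uh (ε ^ 1))).symm
        (μ (((Ut ε).trans (Uh (ε ^ 1))) x) (((Ut ε).trans (Uh (ε ^ 1))) y)))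
        = fun _ => μt x y := funext fun ε => Subsingleton.elim _ _
    rw [he]
    exact tendsto_const_nhds
  · have hn : 0 < Module.finrank ℝ V := Module.finrank_pos
    set e : Module.Basis (Fin (Module.finrank ℝ V)) ℝ V := Module.finBasis ℝ V with hedef
    haveI : Nonempty (Fin (Module.finrank ℝ V)) := ⟨⟨0, hn⟩⟩
    choose NH δH hδH FH0 HH0 hFH0an hHH0an hUhEq using fun i => (hlaurent (e i)).1
    choose NT δT hδT PT0 GT0 hPT0an hGT0an hUtEq using fun i => (hlaurent (e i)).2
    set KT := Finset.univ.sup NT with hKTdef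
    set KH := Finset.univ.sup NH with hKHdef
    set δ0 : ℝ := Finset.univ.inf' Finset.univ_nonempty (fun i => min (δH i) (δT i)) with hδ0def
    have hδ0 : 0 < δ0 := by
      rw [hδ0def, Finset.lt_inf'_iff]
      exact fun i _ => lt_min (hδH i) (hδT i)
    have hδ0H : ∀ i, δ0 ≤ δH i := fun i =>
      le_trans (Finset.inf'_le _ (Finset.mem_univ i)) (min_le_left _ _)
    have hδ0T : ∀ i, δ0 ≤ δT i := fun i =>
      le_trans (Finset.inf'_le _ (Finset.mem_univ i)) (min_le_right _ _)
    set PT : Fin (Module.finrank ℝ V) → ℝ → V :=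
      fun i ε => ε ^ (KT - NT i) • PT0 i ε with hPTdef
    set GT : Fin (Module.finrank ℝ V) → ℝ → V :=
      fun i ε => ε ^ (KT - NT i) • GT0 i ε with hGTdef
    set FH : Fin (Module.finrank ℝ V) → ℝ → V :=
      fun i η => η ^ (KH - NH i) • FH0 i η with hFHdef
    set HH : Fin (Module.finrank ℝ V) → ℝ → V :=
      fun i η => η ^ (KH - NH i) • HH0 i η with hHHdef
    have hUtE : ∀ i, ∀ ε ∈ Set.Ioo (0:ℝ) δ0,
        Ut ε (e i) = (ε ^ KT)⁻¹ • PT i ε ∧ (Ut ε).symm (e i) = (ε ^ KT)⁻¹ • GT i ε := by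
      intro i ε hε
      have hmem : ε ∈ Set.Ioo (0:ℝ) (δT i) := ⟨hε.1, lt_of_lt_of_le hε.2 (hδ0T i)⟩
      obtain ⟨ha, hb⟩ := hUtEq i ε hmem
      have ha' : Ut ε (e i) = ε ^ (-(NT i : ℤ)) • PT0 i ε := ha
      have hb' : (Ut ε).symm (e i) = ε ^ (-(NT i : ℤ)) • GT0 i ε := hb
      have hz := zpow_neg_nat_eq ε hε.1.ne' (Finset.le_sup (Finset.mem_univ i) : NT i ≤ KT)
      simp only [hPTdef, hGTdef]
      constructor
      · rw [ha', hz, mul_smul]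
      · rw [hb', hz, mul_smul]
    have hUhE : ∀ i, ∀ η ∈ Set.Ioo (0:ℝ) δ0,
        Uh η (e i) = (η ^ KH)⁻¹ • FH i η ∧ (Uh η).symm (e i) = (η ^ KH)⁻¹ • HH i η := by
      intro i η hη
      have hmem : η ∈ Set.Ioo (0:ℝ) (δH i) := ⟨hη.1, lt_of_lt_of_le hη.2 (hδ0H i)⟩
      obtain ⟨ha, hb⟩ := hUhEq i η hmem
      have ha' : Uh η (e i) = η ^ (-(NH i : ℤ)) • FH0 i η := ha
      have hb' : (Uh η).symm (e i) = η ^ (-(NH i : ℤ)) • HH0 i η := hb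
      have hz := zpow_neg_nat_eq η hη.1.ne' (Finset.le_sup (Finset.mem_univ i) : NH i ≤ KH)
      simp only [hFHdef, hHHdef]
      constructor
      · rw [ha', hz, mul_smul]
      · rw [hb', hz, mul_smul]
    have hmem0T : ∀ i, (0:ℝ) ∈ Set.Ioo (-(δT i)) (δT i) := fun i => ⟨by linarith [hδT i], hδT i⟩
    have hmem0H : ∀ i, (0:ℝ) ∈ Set.Ioo (-(δH i)) (δH i) := fun i => ⟨by linarith [hδH i], hδH i⟩
    have hPTan : ∀ i, AnalyticAt ℝ (PT i) 0 := fun i =>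
      (analyticAt_id.pow _).smul (hPT0an i 0 (hmem0T i))
    have hGTan : ∀ i, AnalyticAt ℝ (GT i) 0 := fun i =>
      (analyticAt_id.pow _).smul (hGT0an i 0 (hmem0T i))
    have hFHan : ∀ i, AnalyticAt ℝ (FH i) 0 := fun i =>
      (analyticAt_id.pow _).smul (hFH0an i 0 (hmem0H i))
    have hHHan : ∀ i, AnalyticAt ℝ (HH i) 0 := fun i =>
      (analyticAt_id.pow _).smul (hHH0an i 0 (hmem0H i))
    set φ : Fin (Module.finrank ℝ V) → V →L[ℝ] ℝ :=
      fun k => LinearMap.toContinuousLinearMap (e.coord k) with hφdef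
    have hexp : ∀ (T : V ≃ₗ[ℝ] V) (w : V), T w = ∑ i, φ i w • T (e i) := by
      intro T w
      conv_lhs => rw [← e.sum_repr w]
      rw [map_sum]
      refine Finset.sum_congr rfl fun i _ => ?_
      rw [map_smul]
      simp only [hφdef, LinearMap.coe_toContinuousLinearMap', Module.Basis.coord_apply]
    -- continuous bilinear version of μ
    let μL : V →ₗ[ℝ] (V →L[ℝ] V) :=
      { toFun := fun v => LinearMap.toContinuousLinearMap (μ v)
        map_add' := fun u v => by
          ext w
          simp [LinearMap.coe_toContinuousLinearMap']
        map_smul' := fun cc v => by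
          ext w
          simp [LinearMap.coe_toContinuousLinearMap'] }
    let μc : V →L[ℝ] V →L[ℝ] V := LinearMap.toContinuousLinearMap μL
    have hμc : ∀ u v : V, μc u v = μ u v := fun u v => by
      simp [μc, μL, LinearMap.coe_toContinuousLinearMap']
    refine ⟨3 * KT + 1, Nat.succ_pos _, ?_⟩
    intro x y
    set Px : ℝ → V := fun ε => ∑ j, φ j x • PT j ε with hPxdef
    set Qy : ℝ → V := fun ε => ∑ j, φ j y • PT j ε with hQydef
    have hUtx : ∀ ε ∈ Set.Ioo (0:ℝ) δ0, Ut ε x = (ε ^ KT)⁻¹ • Px ε := by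
      intro ε hε
      rw [hexp (Ut ε) x]
      simp only [hPxdef]
      rw [Finset.smul_sum]
      refine Finset.sum_congr rfl fun i _ => ?_
      rw [(hUtE i ε hε).1, smul_comm]
    have hUty : ∀ ε ∈ Set.Ioo (0:ℝ) δ0, Ut ε y = (ε ^ KT)⁻¹ • Qy ε := by
      intro ε hε
      rw [hexp (Ut ε) y]
      simp only [hQydef]
      rw [Finset.smul_sum]
      refine Finset.sum_congr rfl fun i _ => ?_
      rw [(hUtE i ε hε).1, smul_comm]
    set r : Fin (Module.finrank ℝ V) × Fin (Module.finrank ℝ V) × Fin (Module.finrank ℝ V)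
        → ℝ → ℝ :=
      fun m η => ∑ k, φ k (μ (FH m.1 η) (FH m.2.1 η)) * φ m.2.2 (HH k η) with hrdef
    set S : Fin (Module.finrank ℝ V) × Fin (Module.finrank ℝ V) × Fin (Module.finrank ℝ V)
        → ℝ → V :=
      fun m ε => (φ m.1 (Px ε) * φ m.2.1 (Qy ε)) • GT m.2.2 ε with hSdef
    have hran : ∀ m, AnalyticAt ℝ (r m) 0 := by
      intro m
      simp only [hrdef]
      apply Finset.analyticAt_fun_sum
      intro k _
      have hμan : AnalyticAt ℝ (fun η => μ (FH m.1 η) (FH m.2.1 η)) 0 := by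
        have h := AnalyticAt.comp₂ (μc.analyticAt_bilinear (FH m.1 0, FH m.2.1 0))
          (hFHan m.1) (hFHan m.2.1)
        exact h.congr (Filter.Eventually.of_forall fun η => hμc _ _)
      exact (((φ k).analyticAt _).comp hμan).mul (((φ m.2.2).analyticAt _).comp (hHHan k))
    have hScont : ∀ m, ContinuousAt (S m) 0 := by
      intro m
      simp only [hSdef]
      have hPx : ContinuousAt Px 0 := by
        simp only [hPxdef]
        exact tendsto_finset_sum _ fun j _ => ((hPTan j).continuousAt.const_smul _)
      have hQy : ContinuousAt Qy 0 := by
        simp only [hQydef]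
        exact tendsto_finset_sum _ fun j _ => ((hPTan j).continuousAt.const_smul _)
      exact ((((φ m.1).continuous.continuousAt.comp hPx)).mul
        (((φ m.2.1).continuous.continuousAt.comp hQy))).smul (hGTan m.2.2).continuousAt
    have hrep : ∀ ε ∈ Set.Ioo (0:ℝ) δ0, ∀ η ∈ Set.Ioo (0:ℝ) δ0,
        (Ut ε).symm ((Uh η).symm (μ (Uh η (Ut ε x)) (Uh η (Ut ε y))))
          = (ε ^ (3 * KT) * η ^ (3 * KH))⁻¹ • ∑ m, r m η • S m ε := by
      intro ε hε η hη
      have hεne : (ε:ℝ) ≠ 0 := hε.1.ne'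
      have hηne : (η:ℝ) ≠ 0 := hη.1.ne'
      have hx1 : Uh η (Ut ε x) = ((ε ^ KT)⁻¹ * (η ^ KH)⁻¹) • ∑ i, φ i (Px ε) • FH i η := by
        rw [hUtx ε hε, map_smul, hexp (Uh η) (Px ε), mul_smul]
        congr 1
        rw [Finset.smul_sum]
        refine Finset.sum_congr rfl fun i _ => ?_
        rw [(hUhE i η hη).1, smul_comm]
      have hy1 : Uh η (Ut ε y) = ((ε ^ KT)⁻¹ * (η ^ KH)⁻¹) • ∑ j, φ j (Qy ε) • FH j η := by
        rw [hUty ε hε, map_smul, hexp (Uh η) (Qy ε), mul_smul]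
        congr 1
        rw [Finset.smul_sum]
        refine Finset.sum_congr rfl fun i _ => ?_
        rw [(hUhE i η hη).1, smul_comm]
      set W : V := ∑ i, ∑ j, (φ i (Px ε) * φ j (Qy ε)) • μ (FH i η) (FH j η) with hWdef
      have hx2 : μ (Uh η (Ut ε x)) (Uh η (Ut ε y))
          = (((ε ^ KT)⁻¹ * (η ^ KH)⁻¹) * ((ε ^ KT)⁻¹ * (η ^ KH)⁻¹)) • W := by
        rw [hx1, hy1, map_smul, map_smul, LinearMap.smul_apply, smul_smul]
        congr 1
        rw [hWdef]
        simp only [map_sum, map_smul, LinearMap.sum_apply, LinearMap.smul_apply,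
          Finset.smul_sum, smul_smul]
        rw [Finset.sum_comm]
        refine Finset.sum_congr rfl fun i _ => Finset.sum_congr rfl fun j _ => ?_
        congr 1
        ring
      have h3 : (Uh η).symm W = (η ^ KH)⁻¹ • ∑ k, φ k W • HH k η := by
        rw [hexp (Uh η).symm W, Finset.smul_sum]
        refine Finset.sum_congr rfl fun k _ => ?_
        rw [(hUhE k η hη).2, smul_comm]
      have h4 : (Ut ε).symm (∑ k, φ k W • HH k η)
          = (ε ^ KT)⁻¹ • ∑ k, ∑ l, (φ k W * φ l (HH k η)) • GT l ε := by
        rw [map_sum, Finset.smul_sum]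
        refine Finset.sum_congr rfl fun k _ => ?_
        rw [map_smul, hexp (Ut ε).symm (HH k η), Finset.smul_sum, Finset.smul_sum]
        refine Finset.sum_congr rfl fun l _ => ?_
        rw [(hUtE l ε hε).2]
        simp only [smul_smul]
        congr 1
        ring
      have h5 : ∀ k, φ k W = ∑ i, ∑ j,
          (φ i (Px ε) * φ j (Qy ε)) * φ k (μ (FH i η) (FH j η)) := by
        intro k
        rw [hWdef, map_sum]
        refine Finset.sum_congr rfl fun i _ => ?_
        rw [map_sum]
        refine Finset.sum_congr rfl fun j _ => ?_
        rw [map_smul, smul_eq_mul]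
      have hD : ∑ k, ∑ l, (φ k W * φ l (HH k η)) • GT l ε
          = ∑ m, r m η • S m ε := by
        have hD1 : ∑ k, ∑ l, (φ k W * φ l (HH k η)) • GT l ε
            = ∑ l, ∑ k, ∑ i, ∑ j,
              ((φ i (Px ε) * φ j (Qy ε)) * φ k (μ (FH i η) (FH j η)) * φ l (HH k η))
                • GT l ε := by
          rw [Finset.sum_comm]
          refine Finset.sum_congr rfl fun l _ => ?_
          refine Finset.sum_congr rfl fun k _ => ?_
          rw [h5 k, Finset.sum_mul, Finset.sum_smul]
          refine Finset.sum_congr rfl fun i _ => ?_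
          rw [Finset.sum_mul, Finset.sum_smul]
        have hD2 : ∑ m, r m η • S m ε
            = ∑ i, ∑ j, ∑ l, ∑ k,
              ((φ i (Px ε) * φ j (Qy ε)) * φ k (μ (FH i η) (FH j η)) * φ l (HH k η))
                • GT l ε := by
          rw [Fintype.sum_prod_type]
          refine Finset.sum_congr rfl fun i _ => ?_
          rw [Fintype.sum_prod_type]
          refine Finset.sum_congr rfl fun j _ => ?_
          refine Finset.sum_congr rfl fun l _ => ?_
          simp only [hrdef, hSdef]
          rw [Finset.sum_smul]
          refine Finset.sum_congr rfl fun k _ => ?_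
          simp only [smul_smul]
          congr 1
          ring
        rw [hD1, hD2, sum_perm4 (fun i j k l =>
          ((φ i (Px ε) * φ j (Qy ε)) * φ k (μ (FH i η) (FH j η)) * φ l (HH k η)) • GT l ε)]
      rw [hx2, map_smul, map_smul, h3, map_smul, h4, hD]
      simp only [smul_smul]
      congr 1
      have e3T : (ε:ℝ) ^ (3 * KT) = ε ^ KT * ε ^ KT * ε ^ KT := by
        rw [← pow_add, ← pow_add]; congr 1; ring
      have e3H : (η:ℝ) ^ (3 * KH) = η ^ KH * η ^ KH * η ^ KH := by
        rw [← pow_add, ← pow_add]; congr 1; ring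
      rw [e3T, e3H]
      field_simp
    have hΦlim1 : ∀ ε : ℝ, Tendsto
        (fun η => (Ut ε).symm ((Uh η).symm (μ (Uh η (Ut ε x)) (Uh η (Ut ε y)))))
        (nhdsWithin 0 (Set.Ioi 0)) (nhds ((Ut ε).symm (μh (Ut ε x) (Ut ε y)))) := by
      intro ε
      have hc : Continuous ((Ut ε).symm.toLinearMap : V →ₗ[ℝ] V) :=
        LinearMap.continuous_of_finiteDimensional _
      exact (hc.tendsto _).comp (h1 (Ut ε x) (Ut ε y))
    exact keyE r S hran hScont (3 * KT) (3 * KH) hδ0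
      (fun ε η => (Ut ε).symm ((Uh η).symm (μ (Uh η (Ut ε x)) (Uh η (Ut ε y)))))
      (fun ε => (Ut ε).symm (μh (Ut ε x) (Ut ε y))) (μt x y)
      hrep (fun ε _ => hΦlim1 ε) (h2 x y) (by omega)
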